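/- arXiv:1807.09070 — 6 statements merged into one kernel-verified Lean document; each statement's English description precedes it below -/
import Mathlib

section
/- For each integer y ≥ 0 define c_y := 2^{2^{m!}} if y = m! for some integer m ≥ 1, and c_y := 1 otherwise. Then for every integer b ≥ 4, the number ∏_{y=0}^∞ (1 + (1/c_y) · (1/b^{2^y})) is transcendental. -/
open Finset

private lemma myProd_le_exp {g : ℕ → ℝ} (hg0 : ∀ n, 0 ≤ g n) (hg : Summable g) (s : Finset ℕ) :
    ∏ i ∈ s, (1 + g i) ≤ Real.exp (∑' n, g n) := by
  calc ∏ i ∈ s, (1 + g i) ≤ ∏ i ∈ s, Real.exp (g i) := by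
        refine Finset.prod_le_prod (fun i _ => by linarith [hg0 i]) (fun i _ => ?_)
        have := Real.add_one_le_exp (g i); linarith
    _ = Real.exp (∑ i ∈ s, g i) := (Real.exp_sum s g).symm
    _ ≤ Real.exp (∑' n, g n) := Real.exp_le_exp.2 (Summable.sum_le_tsum s (fun i _ => hg0 i) hg)

private lemma myMono {g : ℕ → ℝ} (hg0 : ∀ n, 0 ≤ g n) :
    Monotone (fun s : Finset ℕ => ∏ i ∈ s, (1 + g i)) := by
  intro s t hst
  simp only
  rw [← Finset.prod_sdiff hst]
  have h1 : (1:ℝ) ≤ ∏ i ∈ t \ s, (1 + g i) := by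
    calc (1:ℝ) = ∏ _i ∈ t \ s, (1:ℝ) := by simp
      _ ≤ ∏ i ∈ t \ s, (1 + g i) :=
          Finset.prod_le_prod (by simp) (fun i _ => by linarith [hg0 i])
  have h2 : (0:ℝ) ≤ ∏ i ∈ s, (1 + g i) :=
    Finset.prod_nonneg (fun i _ => by linarith [hg0 i])
  nlinarith

private lemma myKey {g : ℕ → ℝ} (hg0 : ∀ n, 0 ≤ g n) (hg : Summable g) :
    HasProd (fun n => 1 + g n) (∏' n, (1 + g n)) ∧
    (∀ s : Finset ℕ, ∏ i ∈ s, (1 + g i) ≤ ∏' n, (1 + g n)) ∧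
    1 ≤ ∏' n, (1 + g n) ∧ (∏' n, (1 + g n)) ≤ Real.exp (∑' n, g n) := by
  set S := Set.range (fun s : Finset ℕ => ∏ i ∈ s, (1 + g i)) with hS
  have hne : S.Nonempty := ⟨1, ⟨∅, by simp⟩⟩
  have hbdd : ∀ x ∈ S, x ≤ Real.exp (∑' n, g n) := by
    rintro x ⟨s, rfl⟩; exact myProd_le_exp hg0 hg s
  have hlub : IsLUB S (sSup S) := isLUB_csSup hne ⟨_, hbdd⟩
  have hprod : HasProd (fun n => 1 + g n) (sSup S) :=
    tendsto_atTop_isLUB (myMono hg0) hlub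
  have htp : ∏' n, (1 + g n) = sSup S := hprod.tprod_eq
  rw [htp]
  exact ⟨hprod, fun s => hlub.1 ⟨s, rfl⟩, hlub.1 ⟨∅, by simp⟩,
    hlub.2 hbdd⟩

private lemma myGeomProd (v : ℝ) (hv : v ≠ 1) (n : ℕ) :
    ∏ i ∈ Finset.range n, (1 + v ^ (2 ^ i)) = (1 - v ^ (2 ^ n)) / (1 - v) := by
  have h1 : (1:ℝ) - v ≠ 0 := sub_ne_zero.2 (Ne.symm hv)
  induction n with
  | zero => simp [div_self h1]
  | succ n ih =>
      rw [Finset.prod_range_succ, ih, pow_succ, pow_mul]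
      field_simp
      ring

private lemma myExp_le {t : ℝ} (ht0 : 0 ≤ t) (ht : t ≤ 1/2) : Real.exp t ≤ 1 + 2 * t := by
  have h1 : 1 - t ≤ Real.exp (-t) := by have := Real.add_one_le_exp (-t); linarith
  have h2 : 0 < 1 - t := by linarith
  have h3 : Real.exp t ≤ 1 / (1 - t) := by
    rw [Real.exp_neg] at h1
    rw [le_div_iff₀ h2]
    calc Real.exp t * (1 - t) ≤ Real.exp t * (Real.exp t)⁻¹ :=
          mul_le_mul_of_nonneg_left h1 (Real.exp_pos t).le
      _ = 1 := mul_inv_cancel₀ (Real.exp_pos t).ne'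
  refine h3.trans ?_
  rw [div_le_iff₀ h2]
  nlinarith

private lemma mySumPow (N : ℕ) : ∑ y ∈ Finset.range N, 2 ^ (y + 1) ≤ 2 ^ (N + 1) := by
  induction N with
  | zero => simp
  | succ N ih =>
      rw [Finset.sum_range_succ]
      calc ∑ y ∈ Finset.range N, 2 ^ (y+1) + 2 ^ (N+1) ≤ 2 ^ (N+1) + 2 ^ (N+1) := by omega
        _ = 2 ^ (N + 2) := by ring

set_option maxHeartbeats 4000000 in
/-- With `c_y := 2^{2^{m!}}` if `y = m!` for some `m ≥ 1` and `c_y := 1` otherwise,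
for every integer `b ≥ 4` the number `∏_{y=0}^∞ (1 + (1/c_y)·(1/b^{2^y}))` is transcendental. -/
theorem stmt_2
    (c : ℕ → ℕ)
    (hc : ∀ y, (∃ m : ℕ, 1 ≤ m ∧ y = Nat.factorial m) → c y = 2 ^ (2 ^ y))
    (hc' : ∀ y, (¬ ∃ m : ℕ, 1 ≤ m ∧ y = Nat.factorial m) → c y = 1)
    (b : ℕ) (hb : 4 ≤ b) :
    Transcendental ℚ (∏' y : ℕ, (1 + (1 / (c y : ℝ)) * (1 / (b : ℝ) ^ (2 ^ y)))) := by
  suffices L : Liouville (∏' y : ℕ, (1 + (1 / (c y : ℝ)) * (1 / (b : ℝ) ^ (2 ^ y)))) by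
    intro halg
    exact L.transcendental ((IsFractionRing.isAlgebraic_iff ℤ ℚ ℝ).mpr halg)
  -- basic facts
  have hb4 : (4:ℝ) ≤ (b:ℝ) := by exact_mod_cast hb
  have hb0 : (0:ℝ) < (b:ℝ) := by linarith
  set u : ℝ := 1 / (b:ℝ) with hu_def
  have hu0 : 0 < u := by positivity
  have hu4 : u ≤ 1/4 := by
    rw [hu_def, div_le_div_iff₀ hb0 (by norm_num)]; linarith
  have hu1 : u < 1 := by linarith
  have hc1 : ∀ y, 1 ≤ c y := by
    intro y
    by_cases h : ∃ m, 1 ≤ m ∧ y = Nat.factorial m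
    · rw [hc y h]; exact Nat.one_le_two_pow
    · rw [hc' y h]
  set a : ℕ → ℝ := fun y => 1 / (c y : ℝ) * (1 / (b : ℝ) ^ (2 ^ y)) with ha_def
  have hcR : ∀ y, (1:ℝ) ≤ (c y : ℝ) := fun y => by exact_mod_cast hc1 y
  have ha_pos : ∀ y, 0 < a y := by
    intro y
    have := hcR y
    have : (0:ℝ) < (c y : ℝ) := by linarith
    positivity
  have ha_u : ∀ y, a y ≤ u ^ (2 ^ y) := by
    intro y
    rw [ha_def]
    simp only
    rw [hu_def, div_pow, one_pow]
    have h1 : (1:ℝ) / (c y : ℝ) ≤ 1 := by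
      rw [div_le_one (by linarith [hcR y])]; exact hcR y
    have h2 : (0:ℝ) < (b:ℝ) ^ (2 ^ y) := by positivity
    calc 1 / (c y : ℝ) * (1 / (b:ℝ) ^ (2^y)) ≤ 1 * (1 / (b:ℝ) ^ (2^y)) := by
          apply mul_le_mul_of_nonneg_right h1; positivity
      _ = 1 / (b:ℝ) ^ (2^y) := by ring
  have hu_half : u ≤ 1/2 := by linarith
  have hupow_le : ∀ y : ℕ, u ^ (2 ^ y) ≤ (1/2) ^ (y + 1) := by
    intro y
    calc u ^ (2^y) ≤ (1/2 : ℝ) ^ (2^y) :=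
          pow_le_pow_left₀ hu0.le hu_half _
      _ ≤ (1/2 : ℝ) ^ (y+1) := by
          apply pow_le_pow_of_le_one (by norm_num) (by norm_num)
          have := Nat.lt_two_pow_self (n := y)
          omega
  have ha_half : ∀ y, a y ≤ (1/2:ℝ) ^ (y+1) := fun y => (ha_u y).trans (hupow_le y)
  have hgeo : Summable (fun y : ℕ => (1/2:ℝ) ^ y) :=
    summable_geometric_of_lt_one (by norm_num) (by norm_num)
  have hsum_half : Summable (fun y : ℕ => (1/2:ℝ) ^ (y+1)) := by
    simp only [pow_succ]
    exact hgeo.mul_right _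
  have hsum : Summable a :=
    Summable.of_nonneg_of_le (fun y => (ha_pos y).le) ha_half hsum_half
  have htsum_half : ∑' y : ℕ, (1/2:ℝ) ^ (y+1) = 1 := by
    simp only [pow_succ]
    rw [tsum_mul_right, tsum_geometric_of_lt_one (by norm_num) (by norm_num)]
    norm_num
  have htsum1 : ∑' y, a y ≤ 1 := by
    rw [← htsum_half]
    exact Summable.tsum_le_tsum ha_half hsum hsum_half
  -- key facts about the full product
  have hK := myKey (g := a) (fun y => (ha_pos y).le) hsum
  have hub : ∀ k : ℕ, u ^ k = 1 / (b:ℝ) ^ k := by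
    intro k; rw [hu_def, div_pow, one_pow]
  have hx3 : (∏' y, (1 + a y)) ≤ 3 := by
    refine hK.2.2.2.trans ?_
    calc Real.exp (∑' y, a y) ≤ Real.exp 1 := Real.exp_le_exp.2 htsum1
      _ ≤ 3 := by have := Real.exp_one_lt_d9; linarith
  show Liouville (∏' y : ℕ, (1 + a y))
  intro n
  -- choose parameters
  set m : ℕ := n + 5 with hm_def
  set N : ℕ := Nat.factorial m + 1 with hN_def
  set M : ℕ := Nat.factorial (m + 1) with hM_def
  have hfaclt : Nat.factorial m < M := by
    rw [hM_def]
    exact Nat.factorial_lt_of_lt (by omega) (by omega)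
  have hNM : N ≤ M := hfaclt
  have hM6 : 6 ≤ M := le_trans (by omega) ((m+1).self_le_factorial)
  have hno : ∀ y, N ≤ y → y < M → c y = 1 := by
    intro y hy1 hy2
    apply hc'
    rintro ⟨k, hk1, rfl⟩
    rcases le_or_gt k m with h | h
    · have := Nat.factorial_le h; omega
    · have := Nat.factorial_le (show m + 1 ≤ k by omega); omega
  have hcM : c M = 2 ^ (2 ^ M) := hc M ⟨m + 1, by omega, rfl⟩
  set v : ℝ := u ^ (2 ^ N) with hv_def
  set s : ℝ := u ^ (2 ^ M) with hs_def
  have hv0 : 0 < v := pow_pos hu0 _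
  have hs0 : 0 < s := pow_pos hu0 _
  have hv4 : v ≤ 1 / 4 := by
    calc v ≤ u ^ 1 := pow_le_pow_of_le_one hu0.le hu1.le Nat.one_le_two_pow
      _ = u := pow_one u
      _ ≤ 1/4 := hu4
  have hs4 : s ≤ 1 / 4 := by
    calc s ≤ u ^ 1 := pow_le_pow_of_le_one hu0.le hu1.le Nat.one_le_two_pow
      _ = u := pow_one u
      _ ≤ 1/4 := hu4
  have hv1 : v < 1 := by linarith
  have hs1 : s < 1 := by linarith
  -- tail sum bound
  have h2M : (16:ℕ) ≤ 2 ^ M := by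
    calc (16:ℕ) = 2 ^ 4 := by norm_num
      _ ≤ 2 ^ M := Nat.pow_le_pow_right (by norm_num) (by omega)
  have htail_le : ∀ i : ℕ, a (i + M) ≤ s * (1/2:ℝ) ^ (i + 4) := by
    intro i
    rcases Nat.eq_zero_or_pos i with rfl | hi
    · have hval : a (0 + M) = 1 / ((2:ℝ) ^ (2 ^ M)) * u ^ (2 ^ M) := by
        rw [zero_add, ha_def]
        simp only
        rw [hcM, hub (2 ^ M)]
        push_cast
        ring
      rw [hval]
      have h16n : (16:ℕ) ≤ 2 ^ (2 ^ M) := by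
        calc (16:ℕ) = 2 ^ 4 := by norm_num
          _ ≤ 2 ^ (2 ^ M) := Nat.pow_le_pow_right (by norm_num) (by omega)
      have h16 : (16:ℝ) ≤ (2:ℝ) ^ (2 ^ M) := by exact_mod_cast h16n
      have hpos : (0:ℝ) < (2:ℝ) ^ (2 ^ M) := by positivity
      have : 1 / ((2:ℝ) ^ (2 ^ M)) ≤ 1 / 16 := by
        apply div_le_div_of_nonneg_left (by norm_num) (by norm_num) h16
      calc 1 / ((2:ℝ) ^ (2 ^ M)) * u ^ (2 ^ M) ≤ (1/16) * s := by
            rw [hs_def]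
            exact mul_le_mul_of_nonneg_right this (by positivity)
        _ = s * (1/2:ℝ) ^ (0 + 4) := by norm_num; ring
    · have h2i : i + 1 ≤ 2 ^ i := Nat.lt_two_pow_self (n := i)
      have hd : 2 ^ M + (i + 4) ≤ 2 ^ (i + M) := by
        have he : 2 ^ (i + M) = 2 ^ i * 2 ^ M := pow_add 2 i M
        have h3 : 16 * i ≤ 2 ^ M * i := Nat.mul_le_mul_right i h2M
        have h4 : (1 + i) * 2 ^ M ≤ 2 ^ i * 2 ^ M := Nat.mul_le_mul_right _ (by omega)
        have h5 : (1 + i) * 2 ^ M = 2 ^ M + i * 2 ^ M := by ring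
        have h6 : i * 2 ^ M = 2 ^ M * i := by ring
        omega
      calc a (i + M) ≤ u ^ (2 ^ (i + M)) := ha_u _
        _ ≤ u ^ (2 ^ M + (i + 4)) := pow_le_pow_of_le_one hu0.le hu1.le hd
        _ = s * u ^ (i + 4) := by rw [pow_add, hs_def]
        _ ≤ s * (1/2:ℝ) ^ (i + 4) := by
            apply mul_le_mul_of_nonneg_left _ hs0.le
            exact pow_le_pow_left₀ hu0.le hu_half _
  have hsumM : Summable (fun i => a (i + M)) := (summable_nat_add_iff M).2 hsum
  have hgsum2 : Summable (fun i : ℕ => s * (1/2:ℝ) ^ (i + 4)) := by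
    have : (fun i : ℕ => s * (1/2:ℝ) ^ (i + 4)) = fun i : ℕ => (s * (1/16)) * (1/2:ℝ) ^ i := by
      funext i; rw [pow_add]; ring_nf
    rw [this]
    exact hgeo.mul_left _
  have htailsum : ∑' i, a (i + M) ≤ s / 8 := by
    have h1 : ∑' i, a (i + M) ≤ ∑' i : ℕ, s * (1/2:ℝ) ^ (i + 4) :=
      Summable.tsum_le_tsum htail_le hsumM hgsum2
    have h2 : ∑' i : ℕ, s * (1/2:ℝ) ^ (i + 4) = s / 8 := by
      have he : (fun i : ℕ => s * (1/2:ℝ) ^ (i + 4)) = fun i : ℕ => (1/2:ℝ) ^ i * (s * (1/16)) := by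
        funext i; rw [pow_add]; ring_nf
      rw [he, tsum_mul_right, tsum_geometric_of_lt_one (by norm_num) (by norm_num)]
      norm_num
      ring
    linarith
  -- split the product at N and M
  have hKM := myKey (g := fun i => a (i + M)) (fun i => (ha_pos _).le) hsumM
  set x : ℝ := ∏' y, (1 + a y) with hx_def
  set T' : ℝ := ∏' i, (1 + a (i + M)) with hT'_def
  set P : ℝ := ∏ y ∈ range N, (1 + a y) with hP_def
  have hsplitM : (∏ y ∈ range M, (1 + a y)) * T' = x :=
    Multipliable.prod_mul_tprod_nat_mul' (f := fun y => 1 + a y) (k := M) ⟨_, hKM.1⟩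
  have hPM : (∏ y ∈ range M, (1 + a y)) = P * (∏ i ∈ range (M - N), (1 + a (N + i))) := by
    have h := Finset.prod_range_add (fun y => 1 + a y) N (M - N)
    rw [show N + (M - N) = M by omega] at h
    rw [hP_def]
    exact h
  have hG : (∏ i ∈ range (M - N), (1 + a (N + i))) = (1 - s) / (1 - v) := by
    have hfac : ∀ i ∈ range (M - N), (1 + a (N + i)) = 1 + v ^ (2 ^ i) := by
      intro i hi
      rw [Finset.mem_range] at hi
      have hcy : c (N + i) = 1 := hno (N + i) (by omega) (by omega)
      have h1 : a (N + i) = u ^ (2 ^ (N + i)) := by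
        show 1 / (c (N + i) : ℝ) * (1 / (b:ℝ) ^ (2 ^ (N + i))) = u ^ (2 ^ (N + i))
        rw [hcy, hub (2 ^ (N + i))]
        norm_num
      rw [h1, show (2:ℕ) ^ (N + i) = 2 ^ N * 2 ^ i from pow_add 2 N i, pow_mul]
    rw [Finset.prod_congr rfl hfac, myGeomProd v (ne_of_lt hv1) (M - N)]
    congr 1
    rw [hv_def, ← pow_mul, ← pow_add, show N + (M - N) = M by omega]
  have hv1' : (0:ℝ) < 1 - v := by linarith
  have hPG : x = P * ((1 - s) / (1 - v)) * T' := by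
    rw [← hsplitM, hPM, hG]
  -- bounds on T' and P
  have hT'1 : 1 ≤ T' := hKM.2.2.1
  have hT'2 : T' ≤ 1 + s / 4 := by
    refine hKM.2.2.2.trans ?_
    calc Real.exp (∑' i, a (i + M)) ≤ Real.exp (s / 8) := Real.exp_le_exp.2 htailsum
      _ ≤ 1 + 2 * (s / 8) := myExp_le (by positivity) (by linarith)
      _ = 1 + s / 4 := by ring
  have hP1 : (1:ℝ) ≤ P := by
    calc (1:ℝ) = ∏ _y ∈ range N, (1:ℝ) := by simp
      _ ≤ P := Finset.prod_le_prod (by simp) (fun i _ => by linarith [ha_pos i])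
  have hP3 : P ≤ 3 := le_trans (hK.2.1 (range N)) hx3
  -- gap bounds
  have hgap_pos : 0 < 1 / (1 - v) - ((1 - s) / (1 - v)) * T' := by
    have h1 : ((1 - s) / (1 - v)) * T' ≤ ((1 - s) / (1 - v)) * (1 + s / 4) :=
      mul_le_mul_of_nonneg_left hT'2 (div_nonneg (by linarith) (by linarith))
    have key : (1 - s) * (1 + s / 4) < 1 := by nlinarith
    have h2 : ((1 - s) / (1 - v)) * (1 + s / 4) < 1 / (1 - v) := by
      rw [div_mul_eq_mul_div, div_lt_div_iff₀ hv1' hv1']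
      nlinarith [mul_lt_mul_of_pos_right key hv1']
    linarith
  have hgap_le : 1 / (1 - v) - ((1 - s) / (1 - v)) * T' ≤ 2 * s := by
    have h1 : ((1 - s) / (1 - v)) * 1 ≤ ((1 - s) / (1 - v)) * T' :=
      mul_le_mul_of_nonneg_left hT'1 (div_nonneg (by linarith) (by linarith))
    have h2 : 1 / (1 - v) - (1 - s) / (1 - v) = s / (1 - v) := by
      field_simp
      ring
    have h3 : s / (1 - v) ≤ 2 * s := by
      rw [div_le_iff₀ hv1']
      nlinarith
    linarith
  -- the rational approximation
  set D : ℕ := ∏ y ∈ range N, (c y * b ^ (2 ^ y)) with hD_def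
  set Pn : ℕ := ∏ y ∈ range N, (c y * b ^ (2 ^ y) + 1) with hPn_def
  set B : ℕ := b ^ (2 ^ N) with hB_def
  have hD1 : 1 ≤ D := Finset.one_le_prod' (fun y _ =>
    Nat.one_le_iff_ne_zero.2 (Nat.mul_ne_zero (by have := hc1 y; omega)
      (pow_ne_zero _ (by omega))))
  have hB4 : 4 ≤ B := by
    calc 4 ≤ b := hb
      _ = b ^ 1 := (pow_one b).symm
      _ ≤ b ^ (2 ^ N) := Nat.pow_le_pow_right (by omega) Nat.one_le_two_pow
  have hDR : (1:ℝ) ≤ (D:ℝ) := by exact_mod_cast hD1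
  have hBR : (4:ℝ) ≤ (B:ℝ) := by exact_mod_cast hB4
  have hPD : P = (Pn:ℝ) / (D:ℝ) := by
    rw [hP_def, hPn_def, hD_def]
    push_cast
    rw [← Finset.prod_div_distrib]
    apply Finset.prod_congr rfl
    intro y _
    have hcy0 : (0:ℝ) < (c y : ℝ) := by linarith [hcR y]
    have hb2y : (0:ℝ) < (b:ℝ) ^ (2 ^ y) := by positivity
    show 1 + 1 / (c y : ℝ) * (1 / (b:ℝ) ^ (2 ^ y)) = _
    field_simp
  have hvB : v = 1 / (B:ℝ) := by
    rw [hv_def, hub (2 ^ N), hB_def]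
    push_cast
    ring
  have hD0 : (D:ℝ) ≠ 0 := by linarith
  have hB0 : (B:ℝ) ≠ 0 := by linarith
  have hB1 : (B:ℝ) - 1 ≠ 0 := by linarith
  have h1mv : 1 - v = ((B:ℝ) - 1) / (B:ℝ) := by
    rw [hvB]; field_simp
  have hinv : 1 / (1 - v) = (B:ℝ) / ((B:ℝ) - 1) := by
    rw [h1mv, one_div_div]
  have hrval : ((((Pn:ℤ) * (B:ℤ)) : ℤ) : ℝ) / ((((D:ℤ) * ((B:ℤ) - 1)) : ℤ) : ℝ)
      = P * (1 / (1 - v)) := by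
    push_cast
    rw [hPD, hinv, div_mul_div_comm]
  have hdiff_eq : P * (1 / (1 - v)) - x = P * (1 / (1 - v) - ((1 - s) / (1 - v)) * T') := by
    rw [hPG]; ring
  have hdiff_pos : 0 < P * (1 / (1 - v)) - x := by
    rw [hdiff_eq]; exact mul_pos (by linarith) hgap_pos
  have hdiff_le : P * (1 / (1 - v)) - x ≤ 6 * s := by
    rw [hdiff_eq]
    calc P * (1 / (1 - v) - ((1 - s) / (1 - v)) * T') ≤ 3 * (2 * s) :=
          mul_le_mul hP3 hgap_le hgap_pos.le (by norm_num)
      _ = 6 * s := by ring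
  -- size of the denominator
  have hqn : D * (B - 1) ≤ b ^ (2 ^ (N + 2)) := by
    have hDle : D ≤ b ^ (2 ^ (N + 1)) := by
      have hstep : ∀ y ∈ range N, c y * b ^ (2 ^ y) ≤ b ^ (2 ^ (y + 1)) := by
        intro y _
        have hcyb : c y ≤ b ^ (2 ^ y) := by
          by_cases hfa : ∃ k, 1 ≤ k ∧ y = Nat.factorial k
          · rw [hc y hfa]; exact Nat.pow_le_pow_left (by omega) _
          · rw [hc' y hfa]; exact Nat.one_le_pow _ _ (by omega)
        calc c y * b ^ (2 ^ y) ≤ b ^ (2 ^ y) * b ^ (2 ^ y) :=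
              Nat.mul_le_mul_right _ hcyb
          _ = b ^ (2 ^ y + 2 ^ y) := (pow_add b _ _).symm
          _ = b ^ (2 ^ (y + 1)) := by rw [show 2 ^ (y + 1) = 2 ^ y + 2 ^ y by ring]
      calc D = ∏ y ∈ range N, (c y * b ^ (2 ^ y)) := hD_def
        _ ≤ ∏ y ∈ range N, b ^ (2 ^ (y + 1)) := Finset.prod_le_prod' hstep
        _ = b ^ (∑ y ∈ range N, 2 ^ (y + 1)) := Finset.prod_pow_eq_pow_sum _ _ _
        _ ≤ b ^ (2 ^ (N + 1)) := Nat.pow_le_pow_right (by omega) (mySumPow N)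
    have he1 : 2 ^ (N + 2) = 2 ^ N * 4 := by ring
    have he2 : 2 ^ (N + 1) = 2 ^ N * 2 := by ring
    calc D * (B - 1) ≤ D * B := Nat.mul_le_mul_left _ (by omega)
      _ ≤ b ^ (2 ^ (N + 1)) * b ^ (2 ^ N) := Nat.mul_le_mul hDle le_rfl
      _ = b ^ (2 ^ (N + 1) + 2 ^ N) := (pow_add b _ _).symm
      _ ≤ b ^ (2 ^ (N + 2)) := Nat.pow_le_pow_right (by omega) (by omega)
  have hq0R : (0:ℝ) < (((D:ℤ) * ((B:ℤ) - 1) : ℤ) : ℝ) := by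
    push_cast
    exact mul_pos (by linarith) (by linarith)
  have hqleR : (((D:ℤ) * ((B:ℤ) - 1) : ℤ) : ℝ) ≤ (b:ℝ) ^ (2 ^ (N + 2)) := by
    have h1 : (((D * (B - 1) : ℕ)) : ℝ) ≤ ((b ^ (2 ^ (N + 2)) : ℕ) : ℝ) := by
      exact_mod_cast hqn
    have h2 : (((D:ℤ) * ((B:ℤ) - 1) : ℤ) : ℝ) = ((D * (B - 1) : ℕ) : ℝ) := by
      push_cast [Nat.cast_sub (show 1 ≤ B by omega)]
      ring
    rw [h2]
    exact h1.trans_eq (by push_cast; ring)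
  have hqpow : ((((D:ℤ) * ((B:ℤ) - 1) : ℤ) : ℝ)) ^ n ≤ (b:ℝ) ^ (2 ^ (N + 2) * n) := by
    calc ((((D:ℤ) * ((B:ℤ) - 1) : ℤ) : ℝ)) ^ n ≤ ((b:ℝ) ^ (2 ^ (N + 2))) ^ n :=
          pow_le_pow_left₀ hq0R.le hqleR n
      _ = (b:ℝ) ^ (2 ^ (N + 2) * n) := (pow_mul _ _ _).symm
  -- exponent inequality
  have hexp : 2 ^ (N + 2) * n + 2 ≤ 2 ^ M := by
    have hN2 : N + 2 = Nat.factorial m + 3 := by omega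
    have hm1 : M = (m + 1) * Nat.factorial m := Nat.factorial_succ m
    have hfp : 1 ≤ Nat.factorial m := Nat.factorial_pos m
    have hmm : m ≤ Nat.factorial m * m := Nat.le_mul_of_pos_left m (Nat.factorial_pos m)
    have hMge : Nat.factorial m + 3 + (n + 2) ≤ M := by
      have hexpand : (m + 1) * Nat.factorial m = Nat.factorial m * m + Nat.factorial m := by
        ring
      omega
    have h8 : 8 ≤ 2 ^ (Nat.factorial m + 3) := by
      calc 8 = 2 ^ 3 := by norm_num
        _ ≤ 2 ^ (Nat.factorial m + 3) := Nat.pow_le_pow_right (by norm_num) (by omega)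
    have h2n : n < 2 ^ n := Nat.lt_two_pow_self (n := n)
    have e2 : 2 ^ (n + 2) = 4 * 2 ^ n := by ring
    calc 2 ^ (N + 2) * n + 2 = 2 ^ (Nat.factorial m + 3) * n + 2 := by rw [hN2]
      _ ≤ 2 ^ (Nat.factorial m + 3) * n + 2 ^ (Nat.factorial m + 3) * 4 :=
          Nat.add_le_add_left (by omega) _
      _ = 2 ^ (Nat.factorial m + 3) * (n + 4) := by ring
      _ ≤ 2 ^ (Nat.factorial m + 3) * 2 ^ (n + 2) := Nat.mul_le_mul_left _ (by omega)
      _ = 2 ^ (Nat.factorial m + 3 + (n + 2)) := (pow_add 2 _ _).symm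
      _ ≤ 2 ^ M := Nat.pow_le_pow_right (by norm_num) hMge
  have hexpR : (b:ℝ) ^ (2 ^ (N + 2) * n + 2) ≤ (b:ℝ) ^ (2 ^ M) :=
    pow_le_pow_right₀ (by linarith) hexp
  have hb16 : (16:ℝ) ≤ (b:ℝ) ^ 2 := by
    calc (16:ℝ) = 4 * 4 := by norm_num
      _ ≤ (b:ℝ) * (b:ℝ) := mul_le_mul hb4 hb4 (by norm_num) (by linarith)
      _ = (b:ℝ) ^ 2 := (sq (b:ℝ)).symm
  have hbig : 6 * ((((D:ℤ) * ((B:ℤ) - 1) : ℤ) : ℝ)) ^ n < (b:ℝ) ^ (2 ^ M) := by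
    have hp1 : (0:ℝ) < (b:ℝ) ^ (2 ^ (N + 2) * n) := by positivity
    calc 6 * ((((D:ℤ) * ((B:ℤ) - 1) : ℤ) : ℝ)) ^ n ≤ 6 * (b:ℝ) ^ (2 ^ (N + 2) * n) := by
          linarith [hqpow]
      _ < (b:ℝ) ^ (2 ^ (N + 2) * n) * 16 := by linarith [hp1]
      _ ≤ (b:ℝ) ^ (2 ^ (N + 2) * n) * (b:ℝ) ^ 2 :=
          mul_le_mul_of_nonneg_left hb16 hp1.le
      _ = (b:ℝ) ^ (2 ^ (N + 2) * n + 2) := (pow_add _ _ _).symm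
      _ ≤ (b:ℝ) ^ (2 ^ M) := hexpR
  have h6s : 6 * s = 6 / (b:ℝ) ^ (2 ^ M) := by
    rw [hs_def, hub (2 ^ M)]; ring
  have hqpow0 : (0:ℝ) < ((((D:ℤ) * ((B:ℤ) - 1) : ℤ) : ℝ)) ^ n := pow_pos hq0R n
  have hfin : 6 * s < 1 / ((((D:ℤ) * ((B:ℤ) - 1) : ℤ) : ℝ)) ^ n := by
    rw [h6s, div_lt_div_iff₀ (by positivity) hqpow0]
    linarith [hbig]
  -- the rational p/q
  refine ⟨(Pn:ℤ) * (B:ℤ), (D:ℤ) * ((B:ℤ) - 1), ?_, ?_, ?_⟩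
  · have h1 : (1:ℤ) ≤ (D:ℤ) := by exact_mod_cast hD1
    have h2 : (4:ℤ) ≤ (B:ℤ) := by exact_mod_cast hB4
    calc (1:ℤ) < 3 := by norm_num
      _ ≤ 1 * ((B:ℤ) - 1) := by linarith
      _ ≤ (D:ℤ) * ((B:ℤ) - 1) := mul_le_mul_of_nonneg_right h1 (by linarith)
  · rw [hrval]
    exact ne_of_lt (by linarith)
  · rw [hrval]
    rw [abs_sub_comm, abs_of_pos (by linarith [hdiff_pos])]
    calc P * (1 / (1 - v)) - x ≤ 6 * s := hdiff_le
      _ < 1 / ((((D:ℤ) * ((B:ℤ) - 1) : ℤ) : ℝ)) ^ n := hfin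
end

section
/- Let A_∞ = (b(n))_{n=0}^∞ be the (L,(q_n),(μ_n))-TM sequence over the alphabet a_j = e^{2πi j / L} (0 ≤ j ≤ L−1), and let G(z) := Σ_{n=0}^∞ b(n) z^n be its generating function. Then for |z| < 1, G(z) = ∏_{y=0}^∞ (1 + Σ_{s=1}^{q_{y+1}−1} e^{2πi μ_y(s) / L} z^{s ∏_{j=0}^{y} q_j}). -/
open Complex


private lemma sum_range_mul_aux {M : Type*} [AddCommMonoid M] (f : ℕ → M) (a b : ℕ) :
    ∑ n ∈ Finset.range (a * b), f n
      = ∑ l ∈ Finset.range a, ∑ r ∈ Finset.range b, f (l * b + r) := by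
  induction a with
  | zero => simp
  | succ a ih =>
      rw [Finset.sum_range_succ, ← ih, Nat.succ_mul, Finset.sum_range_add]

private theorem stmt_9_aux
    (L : ℕ)
    (q : ℕ → ℕ) (hq0 : q 0 = 1) (hq : ∀ n, 1 ≤ n → 2 ≤ q n)
    (Q : ℕ → ℕ) (hQ : ∀ n, Q n = ∏ j ∈ Finset.range (n + 1), q j)
    (μ : ℕ → ℕ → ZMod L)
    (u : ℕ → ZMod L) (hu0 : u 0 = 0)
    (hrec : ∀ n l r, 1 ≤ l → l ≤ q (n + 1) - 1 → r < Q n →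
      u (l * Q n + r) = u r + μ n l)
    (E : ZMod L → ℂ) (hE0 : E 0 = 1)
    (hEadd : ∀ a b : ZMod L, E (a + b) = E a * E b)
    (hEnorm : ∀ x : ZMod L, ‖E x‖ = 1)
    (z : ℂ) (hz : ‖z‖ < 1) :
    (∑' n : ℕ, E (u n) * z ^ n) =
      ∏' y : ℕ, (1 + ∑ s ∈ Finset.Icc 1 (q (y + 1) - 1), E (μ y s) * z ^ (s * Q y)) := by
  set b : ℕ → ℂ := fun n => E (u n) * z ^ n with hb
  set w : ℕ → ℂ := fun y => ∑ s ∈ Finset.Icc 1 (q (y + 1) - 1), E (μ y s) * z ^ (s * Q y)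
    with hw
  set F : ℕ → ℂ := fun y => 1 + w y with hF
  have hQsucc : ∀ n, Q (n + 1) = q (n + 1) * Q n := by
    intro n; rw [hQ, hQ, Finset.prod_range_succ, mul_comm]
  have hQpos : ∀ n, 0 < Q n := by
    intro n; rw [hQ]
    apply Finset.prod_pos
    intro j _
    rcases Nat.eq_zero_or_pos j with h | h
    · simp [h, hq0]
    · exact lt_of_lt_of_le (by norm_num) (hq j h)
  have hQge : ∀ n, n + 1 ≤ Q n := by
    intro n
    induction n with
    | zero => rw [hQ]; simp [hq0]
    | succ n ih =>
        rw [hQsucc]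
        have h2 : 2 ≤ q (n + 1) := hq _ (by omega)
        calc n + 2 ≤ 2 * (n + 1) := by omega
        _ ≤ q (n + 1) * Q n := Nat.mul_le_mul h2 ih
  -- key finite identity
  have key : ∀ N, ∑ n ∈ Finset.range (Q N), b n = ∏ y ∈ Finset.range N, F y := by
    intro N
    induction N with
    | zero =>
        have h1 : Q 0 = 1 := by rw [hQ]; simp [hq0]
        rw [h1]
        simp [hb, hu0, hE0]
    | succ N ih =>
        have hq2 : 2 ≤ q (N + 1) := hq _ (by omega)
        obtain ⟨m, hm⟩ : ∃ m, q (N + 1) = m + 1 := ⟨q (N + 1) - 1, by omega⟩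
        have hm' : q (N + 1) - 1 = m := by omega
        rw [hQsucc, sum_range_mul_aux, hm, Finset.sum_range_succ']
        have inner0 : ∑ r ∈ Finset.range (Q N), b (0 * Q N + r)
            = ∑ n ∈ Finset.range (Q N), b n := by simp
        have innerl : ∀ i ∈ Finset.range m,
            ∑ r ∈ Finset.range (Q N), b ((i + 1) * Q N + r)
              = (E (μ N (i + 1)) * z ^ ((i + 1) * Q N)) * ∑ n ∈ Finset.range (Q N), b n := by
          intro i hi
          rw [Finset.mul_sum]
          apply Finset.sum_congr rfl
          intro r hr
          rw [hb]
          simp only []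
          have him := Finset.mem_range.mp hi
          rw [hrec N (i + 1) r (by omega) (by omega) (Finset.mem_range.mp hr), hEadd, pow_add]
          ring
        rw [inner0, Finset.sum_congr rfl innerl, ← Finset.sum_mul, ih, Finset.prod_range_succ]
        have hIcc : ∑ s ∈ Finset.Icc 1 (q (N + 1) - 1), E (μ N s) * z ^ (s * Q N)
            = ∑ i ∈ Finset.range m, E (μ N (i + 1)) * z ^ ((i + 1) * Q N) := by
          rw [hm', ← Finset.Ico_add_one_right_eq_Icc, Finset.sum_Ico_eq_sum_range]
          simp [add_comm]
        rw [hF]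
        simp only [hw]
        rw [hIcc]
        ring
  -- summability of b
  have hgs : Summable (fun s : ℕ => ‖z‖ ^ s) := summable_geometric_of_lt_one (norm_nonneg z) hz
  have hbsum : Summable b := by
    apply Summable.of_norm_bounded hgs
    intro n
    rw [hb]
    simp only []
    rw [norm_mul, hEnorm, one_mul, norm_pow]
  -- bound on w
  have hwle : ∀ y, ‖w y‖ ≤ (1 - ‖z‖)⁻¹ * ‖z‖ ^ y := by
    intro y
    calc ‖w y‖ ≤ ∑ s ∈ Finset.Icc 1 (q (y + 1) - 1), ‖E (μ y s) * z ^ (s * Q y)‖ :=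
          norm_sum_le _ _
    _ = ∑ s ∈ Finset.Icc 1 (q (y + 1) - 1), ‖z‖ ^ (s * Q y) := by
          apply Finset.sum_congr rfl
          intro s _
          rw [norm_mul, hEnorm, one_mul, norm_pow]
    _ ≤ ∑ s ∈ Finset.Icc 1 (q (y + 1) - 1), ‖z‖ ^ y * ‖z‖ ^ s := by
          apply Finset.sum_le_sum
          intro s hs
          rw [← pow_add]
          apply pow_le_pow_of_le_one (norm_nonneg z) hz.le
          have hs1 : 1 ≤ s := (Finset.mem_Icc.mp hs).1
          have h1 : y + 1 ≤ Q y := hQge y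
          calc y + s ≤ s * (y + 1) := by nlinarith
          _ ≤ s * Q y := Nat.mul_le_mul_left s h1
    _ = ‖z‖ ^ y * ∑ s ∈ Finset.Icc 1 (q (y + 1) - 1), ‖z‖ ^ s := by rw [Finset.mul_sum]
    _ ≤ ‖z‖ ^ y * (1 - ‖z‖)⁻¹ := by
          apply mul_le_mul_of_nonneg_left _ (pow_nonneg (norm_nonneg z) y)
          rw [← tsum_geometric_of_lt_one (norm_nonneg z) hz]
          exact Summable.sum_le_tsum _ (fun s _ => pow_nonneg (norm_nonneg z) s) hgs
    _ = (1 - ‖z‖)⁻¹ * ‖z‖ ^ y := mul_comm _ _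
  have hwsum : Summable (fun y => ‖w y‖) :=
    Summable.of_nonneg_of_le (fun y => norm_nonneg _) hwle (hgs.mul_left _)
  -- eventually small
  have htz : Filter.Tendsto (fun y => ‖w y‖) Filter.atTop (nhds 0) := hwsum.tendsto_atTop_zero
  obtain ⟨k, hk⟩ := Filter.eventually_atTop.mp
    (htz.eventually (gt_mem_nhds (by norm_num : (0 : ℝ) < 1 / 2)))
  -- multipliability
  have hwk : ∀ n : ℕ, ‖w (n + k)‖ ≤ 1 / 2 := fun n => (hk (n + k) (by omega)).le
  have hmulshift : Multipliable (fun n : ℕ => F (n + k)) := by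
    have hs : Summable (fun n => ‖w (n + k)‖) :=
      (summable_nat_add_iff (f := fun y => ‖w y‖) k).mpr hwsum
    have hm := Complex.multipliable_one_add_of_summable (f := fun n => w (n + k))
      (Summable.of_norm hs)
    exact hm
  have hmulF : Multipliable F := hmulshift.comp_nat_add
  -- limits
  have hQsm : StrictMono Q := by
    apply strictMono_nat_of_lt_succ
    intro n
    rw [hQsucc]
    have h2 : 2 ≤ q (n + 1) := hq _ (by omega)
    have := hQpos n
    calc Q n < 2 * Q n := by omega
    _ ≤ q (n + 1) * Q n := Nat.mul_le_mul_right _ h2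
  have t1 : Filter.Tendsto (fun N => ∑ n ∈ Finset.range (Q N), b n) Filter.atTop
      (nhds (∑' n, b n)) :=
    hbsum.hasSum.tendsto_sum_nat.comp hQsm.tendsto_atTop
  have t2 : Filter.Tendsto (fun N => ∏ y ∈ Finset.range N, F y) Filter.atTop
      (nhds (∏' y, F y)) := hmulF.hasProd.tendsto_prod_nat
  have : (fun N => ∑ n ∈ Finset.range (Q N), b n) = fun N => ∏ y ∈ Finset.range N, F y :=
    funext key
  rw [this] at t1
  exact tendsto_nhds_unique t1 t2

/-- Let `A_∞ = (b(n))` be the `(L,(q_n),(μ_n))`-TM sequence over the alphabet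
`a_j = e^{2πij/L}` (encoded via the index sequence `u : ℕ → ZMod L` with `u 0 = 0` and
`u (l·Q_n + r) = u r + μ_n l` for `1 ≤ l ≤ q_{n+1}−1`, `0 ≤ r < Q_n`, so that
`b(n) = e^{2πi·u(n)/L}`).  Then for `|z| < 1` the generating function satisfies
`Σ_n b(n) z^n = ∏_{y=0}^∞ (1 + Σ_{s=1}^{q_{y+1}−1} e^{2πi μ_y(s)/L} z^{s Q_y})`. -/
theorem stmt_9
    (L : ℕ) (hL : 2 ≤ L)
    (q : ℕ → ℕ) (hq0 : q 0 = 1) (hq : ∀ n, 1 ≤ n → 2 ≤ q n)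
    (Q : ℕ → ℕ) (hQ : ∀ n, Q n = ∏ j ∈ Finset.range (n + 1), q j)
    (μ : ℕ → ℕ → ZMod L)
    (u : ℕ → ZMod L) (hu0 : u 0 = 0)
    (hrec : ∀ n l r, 1 ≤ l → l ≤ q (n + 1) - 1 → r < Q n →
      u (l * Q n + r) = u r + μ n l)
    (z : ℂ) (hz : ‖z‖ < 1) :
    (∑' n : ℕ, Complex.exp (2 * Real.pi * Complex.I * ((u n).val : ℂ) / (L : ℂ)) * z ^ n) =
      ∏' y : ℕ, (1 + ∑ s ∈ Finset.Icc 1 (q (y + 1) - 1),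
        Complex.exp (2 * Real.pi * Complex.I * ((μ y s).val : ℂ) / (L : ℂ)) * z ^ (s * Q y)) := by
  haveI : NeZero L := ⟨by omega⟩
  have hL0 : (L : ℂ) ≠ 0 := by
    exact_mod_cast (by omega : L ≠ 0)
  have hE0 : Complex.exp (2 * Real.pi * Complex.I * (((0 : ZMod L).val : ℕ) : ℂ) / (L : ℂ)) = 1 := by
    simp [ZMod.val_zero]
  have hEadd : ∀ a c : ZMod L,
      Complex.exp (2 * Real.pi * Complex.I * (((a + c).val : ℕ) : ℂ) / (L : ℂ))
        = Complex.exp (2 * Real.pi * Complex.I * ((a.val : ℕ) : ℂ) / (L : ℂ)) *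
          Complex.exp (2 * Real.pi * Complex.I * ((c.val : ℕ) : ℂ) / (L : ℂ)) := by
    intro a c
    rw [← Complex.exp_add]
    have hval : a.val + c.val = (a + c).val + L * ((a.val + c.val) / L) := by
      rw [ZMod.val_add]
      exact (Nat.mod_add_div _ _).symm
    have hvalC : ((a.val : ℂ) + (c.val : ℂ))
        = (((a + c).val : ℕ) : ℂ) + (L : ℂ) * (((a.val + c.val) / L : ℕ) : ℂ) := by
      exact_mod_cast congrArg (fun n : ℕ => (n : ℂ)) hval
    have harg : 2 * (Real.pi : ℂ) * Complex.I * ((a.val : ℕ) : ℂ) / (L : ℂ)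
          + 2 * (Real.pi : ℂ) * Complex.I * ((c.val : ℕ) : ℂ) / (L : ℂ)
        = 2 * (Real.pi : ℂ) * Complex.I * (((a + c).val : ℕ) : ℂ) / (L : ℂ)
          + (((a.val + c.val) / L : ℕ) : ℂ) * (2 * Real.pi * Complex.I) := by
      rw [← add_div, div_add' _ _ _ hL0, div_left_inj' hL0]
      simp only [ZMod.natCast_val] at hvalC ⊢
      linear_combination (2 * (Real.pi : ℂ) * Complex.I) * hvalC
    rw [harg, Complex.exp_add, Complex.exp_nat_mul_two_pi_mul_I, mul_one]
  have hEnorm : ∀ x : ZMod L,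
      ‖Complex.exp (2 * Real.pi * Complex.I * ((x.val : ℕ) : ℂ) / (L : ℂ))‖ = 1 := by
    intro x
    have harg : 2 * (Real.pi : ℂ) * Complex.I * ((x.val : ℕ) : ℂ) / (L : ℂ)
        = ((2 * Real.pi * (x.val : ℝ) / (L : ℝ) : ℝ) : ℂ) * Complex.I := by
      push_cast
      ring
    rw [harg, Complex.norm_exp_ofReal_mul_I]
  exact stmt_9_aux L q hq0 hq Q hQ μ u hu0 hrec
    (fun x => Complex.exp (2 * Real.pi * Complex.I * ((x.val : ℕ) : ℂ) / (L : ℂ)))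
    hE0 hEadd hEnorm z hz
end

section
/- Let (q_j)_{j=0}^∞ be an integer sequence with q_0 = 1 and q_j ≥ 2 for j ≥ 1. For a positive integer n with (q_j)-representation n = Σ_{y=0}^∞ s_{n,y} ∏_{j=0}^{y} q_j, let y_{n,min} := min{ y : s_{n,y} ≠ 0 }. Then for every positive integer l and every non-negative integer t, there exists a positive integer x such that the digits of n = x·l satisfy s_{n, y_{n,min}} = 1 and s_{n, y} = 0 for every y with y_{n,min} < y < y_{n,min} + t. -/
/-- Every natural number `a`, scaled by `Q s`, has a digit representation with
digits only at positions `≥ s`. -/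
lemma rep_lemma (q : ℕ → ℕ) (hq : ∀ j, 1 ≤ j → 2 ≤ q j)
    (Q : ℕ → ℕ) (hQ : ∀ y, Q y = ∏ j ∈ Finset.range (y + 1), q j) :
    ∀ a s : ℕ, ∃ d : ℕ →₀ ℕ, (∀ y, d y ≤ q (y + 1) - 1) ∧ (∀ y, y < s → d y = 0) ∧
      (d.sum fun y c => c * Q y) = a * Q s := by
  intro a
  induction a using Nat.strong_induction_on with
  | _ a ih =>
    intro s
    rcases Nat.eq_zero_or_pos a with h0 | hpos
    · exact ⟨0, by simp, by simp, by simp [h0]⟩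
    · have hb : 2 ≤ q (s + 1) := hq _ (by omega)
      have hlt : a / q (s + 1) < a := Nat.div_lt_self hpos (by omega)
      obtain ⟨d', hd1, hd2, hd3⟩ := ih _ hlt (s + 1)
      have hQs : Q (s + 1) = Q s * q (s + 1) := by
        rw [hQ, hQ, Finset.prod_range_succ]
      have hds : d' s = 0 := hd2 s (by omega)
      refine ⟨d' + Finsupp.single s (a % q (s + 1)), ?_, ?_, ?_⟩
      · intro y
        rcases eq_or_ne y s with rfl | hne
        · simp only [Finsupp.add_apply, Finsupp.single_eq_same, hds, zero_add]
          have := Nat.mod_lt a (show 0 < q (y + 1) by omega)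
          omega
        · simp only [Finsupp.add_apply, Finsupp.single_eq_of_ne' (Ne.symm hne), add_zero]
          exact hd1 y
      · intro y hy
        have h1 : d' y = 0 := hd2 y (by omega)
        have h2 : y ≠ s := by omega
        simp [Finsupp.add_apply, h1, Finsupp.single_eq_of_ne' (Ne.symm h2)]
      · rw [Finsupp.sum_add_index (by simp) (by intros; ring)]
        rw [Finsupp.sum_single_index (by simp), hd3, hQs]
        have := Nat.div_add_mod a (q (s + 1))
        calc a / q (s + 1) * (Q s * q (s + 1)) + a % q (s + 1) * Q s
            = (a / q (s + 1) * q (s + 1) + a % q (s + 1)) * Q s := by ring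
          _ = a * Q s := by rw [mul_comm (a / q (s + 1)) (q (s + 1)), this]

lemma exists_inv_aux (P L : ℕ) (hL : 0 < L) (h : Nat.Coprime P L) :
    ∃ a : ℕ, L ∣ 1 + a * P := by
  haveI : NeZero L := ⟨hL.ne'⟩
  refine ⟨(-(P : ZMod L)⁻¹).val, ?_⟩
  have h1 : ((1 + (-(P : ZMod L)⁻¹).val * P : ℕ) : ZMod L) = 0 := by
    push_cast
    rw [ZMod.natCast_val, ZMod.cast_id]
    have := ZMod.coe_mul_inv_eq_one P h
    ring_nf
    ring_nf at this
    rw [mul_comm] at this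
    rw [this]
    ring
  exact (ZMod.natCast_eq_zero_iff _ _).mp h1

/-- For an integer sequence `(q_j)` with `q_0 = 1` and `q_j ≥ 2` for `j ≥ 1`,
for every positive integer `l` and every natural number `t` there is a positive integer `x`
such that in the `(q_j)`-representation of `n = x·l`, the least nonzero digit equals `1`
and the next `t − 1` digits above it vanish. -/
theorem stmt_10
    (q : ℕ → ℕ) (hq0 : q 0 = 1) (hq : ∀ j, 1 ≤ j → 2 ≤ q j)
    (Q : ℕ → ℕ) (hQ : ∀ y, Q y = ∏ j ∈ Finset.range (y + 1), q j)
    (l : ℕ) (hl : 0 < l) (t : ℕ) :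
    ∃ x : ℕ, 0 < x ∧ ∃ d : ℕ →₀ ℕ,
      (∀ y, d y ≤ q (y + 1) - 1) ∧
      x * l = ∑ y ∈ d.support, d y * Q y ∧
      ∃ ymin : ℕ,
        d ymin = 1 ∧ (∀ y, y < ymin → d y = 0) ∧
        (∀ y, ymin < y → y < ymin + t → d y = 0) := by
  classical
  -- basic facts about Q
  have hqpos : ∀ j, 0 < q j := by
    intro j
    rcases Nat.eq_zero_or_pos j with rfl | hj
    · omega
    · have := hq j hj; omega
  have hQpos : ∀ y, 0 < Q y := by
    intro y; rw [hQ]; exact Finset.prod_pos fun i _ => hqpos i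
  have hQdvd : ∀ {y y' : ℕ}, y ≤ y' → Q y ∣ Q y' := by
    intro y y' h
    rw [hQ, hQ]
    exact Finset.prod_dvd_prod_of_subset _ _ _ (Finset.range_subset_range.mpr (by omega))
  -- the gcd sequence
  set f : ℕ → ℕ := fun y => Nat.gcd l (Q y) with hf
  have hfpos : ∀ y, 0 < f y := fun y => Nat.gcd_pos_of_pos_left _ hl
  have hfle : ∀ y, f y ≤ l := fun y => Nat.le_of_dvd hl (Nat.gcd_dvd_left _ _)
  have hfdvd : ∀ {y y' : ℕ}, y ≤ y' → f y ∣ f y' := by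
    intro y y' h
    exact Nat.dvd_gcd (Nat.gcd_dvd_left _ _) ((Nat.gcd_dvd_right _ _).trans (hQdvd h))
  -- stabilization: take Y achieving the maximal value of f
  set m : ℕ := Nat.findGreatest (fun v => ∃ y, f y = v) l with hm
  have hPm : ∃ y, f y = m := Nat.findGreatest_spec (P := fun v => ∃ y, f y = v)
    (hfle 0) ⟨0, rfl⟩
  obtain ⟨Y, hY⟩ := hPm
  have hstab : ∀ y, Y ≤ y → f y = f Y := by
    intro y hy
    have h1 : f Y ∣ f y := hfdvd hy
    have h2 : f y ≤ m := Nat.le_findGreatest (hfle y) ⟨y, rfl⟩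
    have h3 : f Y ≤ f y := Nat.le_of_dvd (hfpos y) h1
    omega
  set g : ℕ := f Y with hg
  have hgdvdl : g ∣ l := Nat.gcd_dvd_left _ _
  have hgdvdQ : g ∣ Q Y := Nat.gcd_dvd_right _ _
  have hgpos : 0 < g := hfpos Y
  set L : ℕ := l / g with hL
  have hlgL : l = g * L := (Nat.mul_div_cancel' hgdvdl).symm
  have hLpos : 0 < L := Nat.div_pos (Nat.le_of_dvd hl hgdvdl) hgpos
  -- the product P of the next t+1 bases
  set P : ℕ := ∏ i ∈ Finset.range (t + 1), q (Y + 1 + i) with hP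
  have hQsplit : Q (Y + t + 1) = Q Y * P := by
    rw [hQ, hQ, hP, show Y + t + 1 + 1 = (Y + 1) + (t + 1) by omega,
      Finset.prod_range_add]
  -- coprimality of P and L
  have hcop : Nat.Coprime P L := by
    rw [Nat.coprime_iff_gcd_eq_one]
    by_contra hne
    obtain ⟨p, hp, hpdvd⟩ := Nat.exists_prime_and_dvd hne
    have hpP : p ∣ P := hpdvd.trans (Nat.gcd_dvd_left _ _)
    have hpL : p ∣ L := hpdvd.trans (Nat.gcd_dvd_right _ _)
    have h1 : g * p ∣ l := by
      obtain ⟨k, hk⟩ := hpL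
      exact ⟨k, by rw [hlgL, hk]; ring⟩
    have h2 : g * p ∣ Q (Y + t + 1) := by
      rw [hQsplit]
      exact mul_dvd_mul hgdvdQ hpP
    have h5 : Nat.gcd l (Q (Y + t + 1)) = g := hstab (Y + t + 1) (by omega)
    have h3 : g * p ∣ g := by
      conv_rhs => rw [← h5]
      exact Nat.dvd_gcd h1 h2
    have := Nat.le_of_dvd hgpos h3
    have hp2 := hp.two_le
    nlinarith
  -- find a with L ∣ 1 + a * P
  obtain ⟨a, ha⟩ := exists_inv_aux P L hLpos hcop
  -- n = Q Y + a * Q (Y + t + 1)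
  set n : ℕ := Q Y + a * Q (Y + t + 1) with hn
  have hln : l ∣ n := by
    obtain ⟨k, hk⟩ := ha
    obtain ⟨c, hc⟩ := hgdvdQ
    refine ⟨c * k, ?_⟩
    rw [hn, hQsplit, hlgL]
    calc Q Y + a * (Q Y * P) = Q Y * (1 + a * P) := by ring
      _ = (g * c) * (L * k) := by rw [← hc, ← hk]
      _ = g * L * (c * k) := by ring
  have hnpos : 0 < n := by
    have := hQpos Y; omega
  -- digits of a at positions ≥ Y + t + 1
  obtain ⟨d', hd1, hd2, hd3⟩ := rep_lemma q hq Q hQ a (Y + t + 1)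
  set d : ℕ →₀ ℕ := d' + Finsupp.single Y 1 with hd
  have hdY : d Y = 1 := by
    have : d' Y = 0 := hd2 Y (by omega)
    simp [hd, Finsupp.add_apply, this]
  refine ⟨n / l, ?_, d, ?_, ?_, Y, hdY, ?_, ?_⟩
  · exact Nat.div_pos (Nat.le_of_dvd hnpos hln) hl
  · intro y
    rcases eq_or_ne y Y with rfl | hne
    · rw [hdY]
      have := hq (y + 1) (by omega)
      omega
    · have : d y = d' y := by
        simp [hd, Finsupp.add_apply, Finsupp.single_eq_of_ne' (Ne.symm hne)]
      rw [this]; exact hd1 y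
  · have hsum : ∑ y ∈ d.support, d y * Q y = d.sum fun y c => c * Q y := rfl
    rw [hsum, hd, Finsupp.sum_add_index (by simp) (by intros; ring),
      Finsupp.sum_single_index (by simp), hd3]
    rw [Nat.div_mul_cancel hln, hn]
    ring
  · intro y hy
    have h1 : d' y = 0 := hd2 y (by omega)
    have h2 : y ≠ Y := by omega
    simp [hd, Finsupp.add_apply, h1, Finsupp.single_eq_of_ne' (Ne.symm h2)]
  · intro y hy1 hy2
    have h1 : d' y = 0 := hd2 y (by omega)
    have h2 : y ≠ Y := by omega
    simp [hd, Finsupp.add_apply, h1, Finsupp.single_eq_of_ne' (Ne.symm h2)]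
end

section
/- Let A_∞ = (a(n))_{n=0}^∞ be an (L,(q_n),(μ_n))-TM sequence. Then A_∞ is ultimately periodic if and only if there exists an integer A ≥ 0 such that μ_{A+y}(s) ≡ μ_A(1) · s · ∏_{j=A+1}^{A+y} q_j (mod L) for all y ∈ ℕ and all s with 1 ≤ s ≤ q_{A+y+1}−1. -/
/-- Let `A_∞ = (A n)` be an `(L,(q_n),(μ_n))`-TM sequence (encoded as in
Statement 8 by an injective `aVec : ZMod L → ℂ` and an index sequence `u` with `u 0 = 0`
and `u (l·Q_n + r) = u r + μ_n l`).  Then `A_∞` is ultimately periodic if and only if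
there exists an integer `A ≥ 0` such that
`μ_{A+y}(s) ≡ μ_A(1)·s·∏_{j=A+1}^{A+y} q_j (mod L)`
for all `y ∈ ℕ` and all `1 ≤ s ≤ q_{A+y+1}−1`. -/
theorem stmt_11
    (L : ℕ) (hL : 2 ≤ L)
    (aVec : ZMod L → ℂ) (hdist : Function.Injective aVec)
    (q : ℕ → ℕ) (hq0 : q 0 = 1) (hq : ∀ n, 1 ≤ n → 2 ≤ q n)
    (Q : ℕ → ℕ) (hQ : ∀ n, Q n = ∏ j ∈ Finset.range (n + 1), q j)
    (μ : ℕ → ℕ → ZMod L)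
    (u : ℕ → ZMod L) (hu0 : u 0 = 0)
    (hrec : ∀ n l r, 1 ≤ l → l ≤ q (n + 1) - 1 → r < Q n →
      u (l * Q n + r) = u r + μ n l)
    (A : ℕ → ℂ) (hA : ∀ n, A n = aVec (u n)) :
    (∃ N : ℕ, ∃ p : ℕ, 0 < p ∧ ∀ n, N ≤ n → A (n + p) = A n) ↔
      (∃ A₀ : ℕ, ∀ y s, 1 ≤ s → s ≤ q (A₀ + y + 1) - 1 →
        μ (A₀ + y) s = ((s * ∏ j ∈ Finset.Icc 1 y, q (A₀ + j) : ℕ) : ZMod L) * μ A₀ 1) := by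
  -- Preliminaries
  have hq2 : ∀ n, 2 ≤ q (n + 1) := fun n => hq (n + 1) (by omega)
  have hQ0 : Q 0 = 1 := by rw [hQ]; simpa using hq0
  have hQsucc : ∀ n, Q (n + 1) = Q n * q (n + 1) := by
    intro n; rw [hQ, hQ, Finset.prod_range_succ]
  have hQge : ∀ n, n + 1 ≤ Q n := by
    intro n
    induction n with
    | zero => omega
    | succ k ih =>
      have := hq2 k
      have := hQsucc k
      nlinarith
  have hQpos : ∀ n, 0 < Q n := fun n => by have := hQge n; omega
  have hQmono : ∀ n y, Q n ≤ Q (n + y) := by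
    intro n y
    induction y with
    | zero => exact le_rfl
    | succ k ih =>
      have h1 := hQsucc (n + k)
      have h2 := hq2 (n + k)
      have h3 := hQpos (n + k)
      calc Q n ≤ Q (n + k) := ih
        _ ≤ Q (n + k + 1) := by rw [h1]; nlinarith
  constructor
  · -- Forward direction
    rintro ⟨N, p, hp, hper⟩
    have huper : ∀ n, N ≤ n → u (n + p) = u n := by
      intro n hn
      apply hdist
      rw [← hA, ← hA]
      exact hper n hn
    -- choose a level B with N + p ≤ Q B
    obtain ⟨B, hB⟩ : ∃ B, N + p ≤ Q B := ⟨N + p, by have := hQge (N + p); omega⟩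
    -- key fact: at any level n with N + p ≤ Q n, μ n l = l * u (Q n - p)
    have key : ∀ n, N + p ≤ Q n → ∀ l, 1 ≤ l → l ≤ q (n + 1) - 1 →
        μ n l = (l : ZMod L) * u (Q n - p) := by
      intro n hn
      have hpQ : p ≤ Q n := by omega
      have hNQ : N ≤ Q n - p := by omega
      have hrp : Q n - p < Q n := by have := hQpos n; omega
      -- base: μ n 1 = u (Q n - p)
      have base : μ n 1 = u (Q n - p) := by
        have h1 : u (1 * Q n + 0) = u 0 + μ n 1 :=
          hrec n 1 0 le_rfl (by have := hq2 n; omega) (hQpos n)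
        have h2 : u ((Q n - p) + p) = u (Q n - p) := huper _ hNQ
        have h3 : (Q n - p) + p = Q n := by omega
        rw [h3] at h2
        simp only [one_mul, add_zero, hu0, zero_add] at h1
        rw [h1] at h2
        exact h2
      intro l hl1 hl2
      induction l with
      | zero => omega
      | succ k ih =>
        rcases Nat.eq_or_lt_of_le hl1 with h1 | h1
        · rw [← h1]; rw [show ((1:ℕ) : ZMod L) = 1 by push_cast; ring, one_mul]
          exact base
        · -- k ≥ 1, k + 1 ≤ q (n+1) - 1
          have hk1 : 1 ≤ k := by omega
          have hk2 : k ≤ q (n + 1) - 1 := by omega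
          have ihk := ih hk1 hk2
          -- u ((k+1) * Q n) = μ n (k+1)
          have h1 : u ((k + 1) * Q n + 0) = u 0 + μ n (k + 1) :=
            hrec n (k + 1) 0 (by omega) hl2 (hQpos n)
          simp only [add_zero, hu0, zero_add] at h1
          -- u (k * Q n + (Q n - p)) = u (Q n - p) + μ n k
          have h2 : u (k * Q n + (Q n - p)) = u (Q n - p) + μ n k :=
            hrec n k (Q n - p) hk1 hk2 hrp
          -- periodicity: u (k * Q n + (Q n - p) + p) = u (k * Q n + (Q n - p))
          have h3 : u ((k * Q n + (Q n - p)) + p) = u (k * Q n + (Q n - p)) :=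
            huper _ (by omega)
          have h4 : (k * Q n + (Q n - p)) + p = (k + 1) * Q n := by
            have : (k + 1) * Q n = k * Q n + Q n := by ring
            omega
          rw [h4] at h3
          rw [h1, h2, ihk] at h3
          rw [h3]
          push_cast
          ring
    -- step: u (Q (n+1) - p) = q (n+1) * u (Q n - p)
    have step : ∀ n, N + p ≤ Q n → u (Q (n + 1) - p) = (q (n + 1) : ZMod L) * u (Q n - p) := by
      intro n hn
      have hpQ : p ≤ Q n := by omega
      have hrp : Q n - p < Q n := by have := hQpos n; omega
      have hq' := hq2 n
      have h1 : u ((q (n + 1) - 1) * Q n + (Q n - p)) = u (Q n - p) + μ n (q (n + 1) - 1) :=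
        hrec n (q (n + 1) - 1) (Q n - p) (by omega) le_rfl hrp
      have h2 : (q (n + 1) - 1) * Q n + (Q n - p) = Q (n + 1) - p := by
        have h3 : Q (n + 1) = q (n + 1) * Q n := by rw [hQsucc]; ring
        have h4 : (q (n + 1) - 1) * Q n + Q n = q (n + 1) * Q n := by
          have : q (n + 1) * Q n = (q (n + 1) - 1) * Q n + 1 * Q n := by
            rw [← Nat.add_mul]; congr 1; omega
          omega
        omega
      rw [h2] at h1
      have h5 := key n hn (q (n + 1) - 1) (by omega) le_rfl
      rw [h5] at h1
      rw [h1]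
      have hcast : ((q (n + 1) - 1 : ℕ) : ZMod L) = (q (n + 1) : ZMod L) - 1 := by
        have : ((q (n + 1) - 1 : ℕ) : ZMod L) = ((q (n + 1) : ℕ) : ZMod L) - ((1 : ℕ) : ZMod L) :=
          Nat.cast_sub (by omega)
        simpa using this
      rw [hcast]
      ring
    -- iterate: u (Q (B + y) - p) = (∏ j in Icc 1 y, q (B + j)) * u (Q B - p)
    have hd : ∀ y, u (Q (B + y) - p) =
        ((∏ j ∈ Finset.Icc 1 y, q (B + j) : ℕ) : ZMod L) * u (Q B - p) := by
      intro y
      induction y with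
      | zero => simp
      | succ k ih =>
        have hQk : N + p ≤ Q (B + k) := le_trans hB (hQmono B k)
        have hs := step (B + k) hQk
        have : B + (k + 1) = (B + k) + 1 := by omega
        rw [this, hs, ih]
        rw [Finset.prod_Icc_succ_top (by omega : 1 ≤ k + 1), this]
        push_cast
        ring
    refine ⟨B, ?_⟩
    intro y s hs1 hs2
    have hQy : N + p ≤ Q (B + y) := le_trans hB (hQmono B y)
    have h1 := key (B + y) hQy s hs1 hs2
    have h2 : μ B 1 = u (Q B - p) := by
      have := key B hB 1 le_rfl (by have := hq2 B; omega)
      simpa using this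
    rw [h1, hd y, h2]
    push_cast
    ring
  · -- Backward direction
    rintro ⟨B, hμ⟩
    set QB := Q B with hQB
    set m := μ B 1 with hm
    -- Q (B + y) = QB * ∏ j in Icc 1 y, q (B + j)
    have hQfac : ∀ y, Q (B + y) = QB * ∏ j ∈ Finset.Icc 1 y, q (B + j) := by
      intro y
      induction y with
      | zero => simp; exact hQB.symm
      | succ k ih =>
        have : B + (k + 1) = (B + k) + 1 := by omega
        rw [this, hQsucc (B + k), ih, Finset.prod_Icc_succ_top (by omega : 1 ≤ k + 1), this]
        ring
    -- main claim
    have claim : ∀ y n, n < Q (B + y) →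
        u n = u (n % QB) + ((n / QB : ℕ) : ZMod L) * m := by
      intro y
      induction y with
      | zero =>
        intro n hn
        simp only [Nat.add_zero] at hn
        rw [Nat.mod_eq_of_lt hn, Nat.div_eq_of_lt hn]
        simp
      | succ k ih =>
        intro n hn
        by_cases hcase : n < Q (B + k)
        · exact ih n hcase
        · push_neg at hcase
          set M := Q (B + k) with hM
          have hMpos : 0 < M := hQpos (B + k)
          set l := n / M with hl
          set r := n % M with hr
          have hl1 : 1 ≤ l := Nat.one_le_div_iff hMpos |>.mpr hcase
          have hrM : r < M := Nat.mod_lt n hMpos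
          have hnQ : n < q (B + k + 1) * M := by
            have h' : B + (k + 1) = (B + k) + 1 := by omega
            rw [h', hQsucc (B + k), Nat.mul_comm] at hn
            exact hn
          have hlq : l < q (B + k + 1) := by
            rw [hl]
            exact Nat.div_lt_iff_lt_mul hMpos |>.mpr hnQ
          have hlq' : l ≤ q (B + k + 1) - 1 := by omega
          have hn_eq : l * M + r = n := by
            rw [hl, hr]
            rw [Nat.mul_comm]
            exact Nat.div_add_mod n M
          have h1 : u (l * M + r) = u r + μ (B + k) l := hrec (B + k) l r hl1 hlq' hrM
          rw [hn_eq] at h1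
          have h2 := hμ k l hl1 hlq'
          have ihr := ih r hrM
          -- arithmetic on indices
          set P := ∏ j ∈ Finset.Icc 1 k, q (B + j) with hP
          have hMfac : M = QB * P := hQfac k
          have hQBpos : 0 < QB := hQpos B
          have hmod : n % QB = r % QB := by
            rw [← hn_eq, hMfac]
            have : l * (QB * P) + r = QB * (l * P) + r := by ring
            rw [this]
            simp [Nat.mul_add_mod]
          have hdiv : n / QB = l * P + r / QB := by
            rw [← hn_eq, hMfac]
            have : l * (QB * P) + r = QB * (l * P) + r := by ring
            rw [this]
            rw [Nat.mul_add_div hQBpos]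
          rw [h1, h2, ihr, hmod, hdiv]
          push_cast
          ring
    -- conclude periodicity with period L * QB
    refine ⟨0, L * QB, Nat.mul_pos (by omega) (hQpos B), ?_⟩
    intro n _
    rw [hA, hA]
    congr 1
    have hbig : ∀ k : ℕ, ∃ y, k < Q (B + y) := by
      intro k
      exact ⟨k, by have := hQge (B + k); omega⟩
    obtain ⟨y, hy⟩ := hbig (n + L * QB)
    have hn1 := claim y (n + L * QB) hy
    have hn2 := claim y n (by omega)
    have hmod : (n + L * QB) % QB = n % QB := by
      simp [Nat.add_mul_mod_self_right]
    have hdiv : (n + L * QB) / QB = n / QB + L := Nat.add_mul_div_right n L (hQpos B)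
    rw [hn1, hn2, hmod, hdiv]
    push_cast
    rw [ZMod.natCast_self]
    ring
end

section
/- Let A_∞ = (a(n))_{n=0}^∞ be an (L,(q_n),(μ_n))-TM sequence. If A_∞ is not ultimately periodic, then for every integer N ≥ 0 and every integer l > 0 the arithmetic subsequence (a(N + n l))_{n=0}^∞ is not ultimately periodic. -/
/-- Let `A_∞ = (A n)` be an `(L,(q_n),(μ_n))`-TM sequence (encoded as in
Statement 8).  If `A_∞` is not ultimately periodic, then for every `N ≥ 0` and every `l > 0`
the arithmetic subsequence `(A (N + n·l))_n` is not ultimately periodic. -/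
theorem stmt_12
    (L : ℕ) (hL : 2 ≤ L)
    (aVec : ZMod L → ℂ) (hdist : Function.Injective aVec)
    (q : ℕ → ℕ) (hq0 : q 0 = 1) (hq : ∀ n, 1 ≤ n → 2 ≤ q n)
    (Q : ℕ → ℕ) (hQ : ∀ n, Q n = ∏ j ∈ Finset.range (n + 1), q j)
    (μ : ℕ → ℕ → ZMod L)
    (u : ℕ → ZMod L) (hu0 : u 0 = 0)
    (hrec : ∀ n l r, 1 ≤ l → l ≤ q (n + 1) - 1 → r < Q n →
      u (l * Q n + r) = u r + μ n l)
    (A : ℕ → ℂ) (hA : ∀ n, A n = aVec (u n))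
    (hnp : ¬ ∃ N : ℕ, ∃ p : ℕ, 0 < p ∧ ∀ n, N ≤ n → A (n + p) = A n) :
    ∀ N l : ℕ, 0 < l →
      ¬ ∃ M : ℕ, ∃ p : ℕ, 0 < p ∧ ∀ n, M ≤ n → A (N + (n + p) * l) = A (N + n * l) := by
  intro N l hl
  rintro ⟨M, p, hp, hper⟩
  classical
  -- Basic facts about Q
  have hQs : ∀ n, Q (n + 1) = Q n * q (n + 1) := fun n => by
    rw [hQ, hQ, Finset.prod_range_succ]
  have hQzero : Q 0 = 1 := by rw [hQ]; simpa using hq0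
  have hQpos : ∀ n, 0 < Q n := by
    intro n
    induction n with
    | zero => omega
    | succ n ih =>
      have h2 := hq (n + 1) (by omega)
      rw [hQs]
      exact Nat.mul_pos ih (by omega)
  have hQdvd : ∀ k n, k ≤ n → Q k ∣ Q n := by
    intro k n hkn
    induction n with
    | zero => have : k = 0 := by omega
              rw [this]
    | succ n ih =>
      rcases Nat.eq_or_lt_of_le hkn with h | h
      · rw [h]
      · exact (ih (by omega)).trans (Dvd.intro _ (hQs n).symm)
  have hQgrow : ∀ C : ℕ, ∃ k, C < Q k := by
    intro C
    have h2 : ∀ n, 2 ^ n ≤ Q n := by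
      intro n
      induction n with
      | zero => simp [hQzero]
      | succ n ih =>
        have := hq (n + 1) (by omega)
        rw [hQs, pow_succ]
        exact Nat.mul_le_mul ih this
    exact ⟨C, lt_of_lt_of_le (Nat.lt_two_pow_self (n := C)) (h2 C)⟩
  -- Additivity of u across a cut at Q k
  have haddn : ∀ n k m r, r < Q k → m * Q k < Q n →
      u (m * Q k + r) = u (m * Q k) + u r := by
    intro n
    induction n with
    | zero =>
      intro k m r hr hm
      rw [hQzero] at hm
      have hQk := hQpos k
      have hm0 : m * Q k = 0 := by omega
      rw [hm0, hu0, zero_add, zero_add]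
    | succ n ih =>
      intro k m r hr hm
      by_cases h : m * Q k < Q n
      · exact ih k m r hr h
      push_neg at h
      have hQkpos := hQpos k
      have hQnpos := hQpos n
      have hmpos : 1 ≤ m := by
        rcases Nat.eq_zero_or_pos m with h0 | h1
        · rw [h0] at h; simp at h; omega
        · exact h1
      have hkn : k ≤ n := by
        by_contra hc
        push_neg at hc
        have hd : Q (n + 1) ∣ Q k := hQdvd _ _ hc
        have h1 : Q (n + 1) ≤ Q k := Nat.le_of_dvd hQkpos hd
        have h2 : Q k ≤ m * Q k := Nat.le_mul_of_pos_left _ hmpos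
        omega
      have hdvdkn : Q k ∣ Q n := hQdvd k n hkn
      have hdm : m * Q k / Q n * Q n + m * Q k % Q n = m * Q k :=
        Nat.div_add_mod' _ _
      set l' := m * Q k / Q n with hl'
      set s := m * Q k % Q n with hs
      have hsQn : s < Q n := Nat.mod_lt _ hQnpos
      have hsQk : Q k ∣ s := by
        have h1 : s = m * Q k - l' * Q n := by omega
        rw [h1]
        exact Nat.dvd_sub (dvd_mul_left _ _) (hdvdkn.mul_left l')
      obtain ⟨m', hm'⟩ := hsQk
      have hl'1 : 1 ≤ l' := (Nat.one_le_div_iff hQnpos).mpr h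
      have hl'q : l' < q (n + 1) := by
        rw [hl', Nat.div_lt_iff_lt_mul hQnpos, mul_comm (q (n + 1)) (Q n), ← hQs]
        exact hm
      have hq2 := hq (n + 1) (by omega)
      have hl'le : l' ≤ q (n + 1) - 1 := by omega
      have hsr : s + r < Q n := by
        have h1 : Q k ∣ Q n - s := Nat.dvd_sub hdvdkn ⟨m', hm'⟩
        have h2 : Q k ≤ Q n - s := Nat.le_of_dvd (by omega) h1
        omega
      have e1 : u (l' * Q n + (s + r)) = u (s + r) + μ n l' :=
        hrec n l' (s + r) hl'1 hl'le hsr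
      have e2 : u (l' * Q n + s) = u s + μ n l' := hrec n l' s hl'1 hl'le hsQn
      have e3 : u (s + r) = u s + u r := by
        have hsm : s = m' * Q k := by rw [hm', mul_comm]
        rw [hsm]
        exact ih k m' r hr (by rw [← hsm]; exact hsQn)
      have hx : m * Q k + r = l' * Q n + (s + r) := by omega
      have hy : m * Q k = l' * Q n + s := by omega
      rw [hx, hy, e1, e2, e3]
      ring
  have hadd : ∀ k m r, r < Q k → u (m * Q k + r) = u (m * Q k) + u r := by
    intro k m r hr
    obtain ⟨n, hn⟩ := hQgrow (m * Q k)
    exact haddn n k m r hr hn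
  -- Periodicity of u along the arithmetic progression
  have hprog : ∀ n, M ≤ n → u (N + n * l + p * l) = u (N + n * l) := by
    intro n hn
    have h1 := hper n hn
    rw [hA, hA] at h1
    have h2 := hdist h1
    have h3 : N + (n + p) * l = N + n * l + p * l := by ring
    rw [h3] at h2
    exact h2
  -- choose a large scale
  obtain ⟨k, hk⟩ := hQgrow (N + M * l + p * l)
  have hQkpos := hQpos k
  have hlp : l ≤ p * l := Nat.le_mul_of_pos_left _ hp
  -- ceiling division helper
  have ceil : ∀ a : ℕ, a ≤ (a + l - 1) / l * l ∧ (a + l - 1) / l * l < a + l := by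
    intro a
    have h1 : (a + l - 1) / l * l ≤ a + l - 1 := Nat.div_mul_le_self _ _
    have h2 : a + l - 1 < ((a + l - 1) / l + 1) * l :=
      (Nat.div_lt_iff_lt_mul hl).mp (Nat.lt_succ_self _)
    have h3 : ((a + l - 1) / l + 1) * l = (a + l - 1) / l * l + l := by ring
    omega
  -- the per-block data
  set c : ℕ → ℕ := fun m => (Q k - p * l + m * Q k - N + l - 1) / l with hcdef
  set x : ℕ → ℕ := fun m => N + c m * l with hxdef
  set r : ℕ → ℕ := fun m => x m - m * Q k with hrdef
  set s : ℕ → ℕ := fun m => x m + p * l - (m + 1) * Q k with hsdef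
  have hmq : ∀ m : ℕ, m * Q k ≤ (m + 1) * Q k ∧ (m+1) * Q k = m * Q k + Q k := by
    intro m; constructor
    · exact Nat.mul_le_mul_right _ (by omega)
    · ring
  have hxb : ∀ m, Q k - p * l + m * Q k ≤ x m ∧ x m < Q k - p * l + m * Q k + l := by
    intro m
    have h := ceil (Q k - p * l + m * Q k - N)
    have hN : N ≤ Q k - p * l + m * Q k := by omega
    have hx1 : x m = N + c m * l := rfl
    have hc1 : c m * l = (Q k - p * l + m * Q k - N + l - 1) / l * l := rfl
    omega
  have hcM : ∀ m, M < c m := by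
    intro m
    have h := (hxb m).1
    have hx1 : x m = N + c m * l := rfl
    have h3 : M * l < c m * l := by omega
    by_contra hc
    push_neg at hc
    exact absurd (Nat.mul_le_mul_right l hc) (by omega)
  have hrb : ∀ m, Q k - p * l ≤ r m ∧ r m < Q k - p * l + l ∧ r m < Q k ∧
      x m = m * Q k + r m := by
    intro m
    have h := hxb m
    have hx1 : r m = x m - m * Q k := rfl
    omega
  have hsb : ∀ m, s m < l ∧ s m < Q k ∧ x m + p * l = (m + 1) * Q k + s m := by
    intro m
    have h := hrb m
    have hs1 : s m = x m + p * l - (m + 1) * Q k := rfl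
    have h2 := (hmq m).2
    omega
  -- the recurrence for w m = u (m * Q k)
  have hw : ∀ m, u ((m + 1) * Q k) = u (m * Q k) + (u (r m) - u (s m)) := by
    intro m
    have h1 : u (x m + p * l) = u (x m) := hprog (c m) (le_of_lt (hcM m))
    have h2 : u (x m) = u (m * Q k) + u (r m) := by
      rw [(hrb m).2.2.2]; exact hadd k m (r m) (hrb m).2.2.1
    have h3 : u (x m + p * l) = u ((m + 1) * Q k) + u (s m) := by
      rw [(hsb m).2.2]; exact hadd k (m + 1) (s m) (hsb m).2.1
    rw [h2, h3] at h1
    linear_combination h1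
  -- periodicity of r and s in m with period l
  have hcper : ∀ m, c (m + l) = c m + Q k := by
    intro m
    have hc1 : c (m + l) = (Q k - p * l + (m + l) * Q k - N + l - 1) / l := rfl
    have hc2 : c m = (Q k - p * l + m * Q k - N + l - 1) / l := rfl
    have h3 : (m + l) * Q k = m * Q k + l * Q k := by ring
    have h4 : Q k - p * l + (m + l) * Q k - N + l - 1
        = (Q k - p * l + m * Q k - N + l - 1) + l * Q k := by omega
    rw [hc1, h4, Nat.add_mul_div_left _ _ hl, ← hc2]
  have hrper : ∀ m, r (m + l) = r m := by
    intro m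
    have hr1 : r (m + l) = x (m + l) - (m + l) * Q k := rfl
    have hr2 : r m = x m - m * Q k := rfl
    have hx1 : x (m + l) = N + c (m + l) * l := rfl
    have hx2 : x m = N + c m * l := rfl
    have h3 : c (m + l) * l = c m * l + Q k * l := by rw [hcper m]; ring
    have h4 : (m + l) * Q k = m * Q k + l * Q k := by ring
    have h5 : Q k * l = l * Q k := by ring
    have h6 := (hxb m).1
    omega
  have hsper : ∀ m, s (m + l) = s m := by
    intro m
    have hs1 : s (m + l) = x (m + l) + p * l - (m + l + 1) * Q k := rfl
    have hs2 : s m = x m + p * l - (m + 1) * Q k := rfl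
    have hx1 : x (m + l) = N + c (m + l) * l := rfl
    have hx2 : x m = N + c m * l := rfl
    have h3 : c (m + l) * l = c m * l + Q k * l := by rw [hcper m]; ring
    have h4 : (m + l + 1) * Q k = (m + 1) * Q k + l * Q k := by ring
    have h5 : Q k * l = l * Q k := by ring
    omega
  -- drift over l steps is constant
  set Δ : ZMod L := u (l * Q k) - u (0 * Q k) with hΔ
  have hwl : ∀ m, u ((m + l) * Q k) = u (m * Q k) + Δ := by
    intro m
    induction m with
    | zero =>
      rw [hΔ, Nat.zero_add]; ring
    | succ m ih =>
      have h1 : m + 1 + l = (m + l) + 1 := by omega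
      rw [h1, hw (m + l), hrper m, hsper m, ih, hw m]
      ring
  have hwL : ∀ j m, u ((m + j * l) * Q k) = u (m * Q k) + j • Δ := by
    intro j
    induction j with
    | zero => intro m; simp
    | succ j ih =>
      intro m
      have h1 : m + (j + 1) * l = (m + j * l) + l := by ring
      rw [h1, hwl (m + j * l), ih m, succ_nsmul]
      ring
  have hLΔ : L • Δ = 0 := by
    rw [nsmul_eq_mul, ZMod.natCast_self, zero_mul]
  -- full periodicity of A with period L * l * Q k
  have hfin : ∀ z, u (z + L * l * Q k) = u z := by
    intro z
    have hz : Q k * (z / Q k) + z % Q k = z := Nat.div_add_mod z (Q k)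
    have hmod : z % Q k < Q k := Nat.mod_lt _ hQkpos
    have h5 : (z / Q k + L * l) * Q k = z / Q k * Q k + L * l * Q k := by ring
    have h2 : Q k * (z / Q k) = z / Q k * Q k := by ring
    have h3 : z / Q k * Q k + z % Q k = z := by omega
    have h1 : z + L * l * Q k = (z / Q k + L * l) * Q k + z % Q k := by omega
    have h4 := hadd k (z / Q k) (z % Q k) hmod
    rw [h3] at h4
    rw [h1, hadd k _ _ hmod, hwL L (z / Q k), hLΔ, add_zero, ← h4]
  exact hnp ⟨0, L * l * Q k, by positivity, fun n _ => by rw [hA, hA, hfin n]⟩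
end

section
/- Let (q_j)_{j=0}^∞ be an integer sequence with q_0 = 1 and q_j ≥ 2 for j ≥ 1, and let c_{s,y} be rational numbers for y ≥ 0 and 1 ≤ s ≤ q_{y+1}−1. Let Σ_{m=0}^∞ a_0(m) z^m be the formal Taylor expansion of ∏_{y=0}^∞ (1 + Σ_{s=1}^{q_{y+1}−1} c_{s,y} z^{s ∏_{j=0}^{y} q_j}), and set Q_n := ∏_{j=0}^{n} q_j. Then for every n ∈ ℕ and every integer l ≥ 0 there exists a rational number f_{l,n} (with f_{0,n} = 1) such that a_0(l·Q_n + r) = f_{l,n} · a_0(r) for all integers r with 0 ≤ r ≤ Q_n − 1. -/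
noncomputable def myF (q Q : ℕ → ℕ) (c : ℕ → ℕ → ℚ) (y : ℕ) : Polynomial ℚ :=
  1 + ∑ s ∈ Finset.Icc 1 (q (y + 1) - 1),
    Polynomial.C (c s y) * (Polynomial.X : Polynomial ℚ) ^ (s * Q y)

lemma myF_deg (q Q : ℕ → ℕ) (c : ℕ → ℕ → ℚ) (y : ℕ) :
    (myF q Q c y).natDegree ≤ (q (y + 1) - 1) * Q y := by
  unfold myF
  refine le_trans (Polynomial.natDegree_add_le _ _) ?_
  rw [Polynomial.natDegree_one]
  refine max_le (Nat.zero_le _) ?_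
  refine Polynomial.natDegree_sum_le_of_forall_le _ _ ?_
  intro s hs
  refine le_trans (Polynomial.natDegree_C_mul_X_pow_le _ _) ?_
  exact Nat.mul_le_mul_right _ (Finset.mem_Icc.mp hs).2

lemma myF_supp (q Q : ℕ → ℕ) (c : ℕ → ℕ → ℚ) (d y : ℕ) (hd : d ∣ Q y)
    (k : ℕ) (hk : ¬ d ∣ k) : (myF q Q c y).coeff k = 0 := by
  unfold myF
  have hk0 : k ≠ 0 := fun h => hk (h ▸ dvd_zero d)
  rw [Polynomial.coeff_add, Polynomial.coeff_one, if_neg hk0,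
    Polynomial.finset_sum_coeff, Finset.sum_eq_zero, add_zero]
  intro s _
  rw [Polynomial.coeff_C_mul, Polynomial.coeff_X_pow, if_neg, mul_zero]
  intro h
  exact hk (h ▸ hd.mul_left s)

lemma prod_supp (d : ℕ) (s : Finset ℕ) (g : ℕ → Polynomial ℚ)
    (h : ∀ y ∈ s, ∀ k, ¬ d ∣ k → (g y).coeff k = 0) :
    ∀ k, ¬ d ∣ k → (∏ y ∈ s, g y).coeff k = 0 := by
  classical
  induction s using Finset.induction with
  | empty =>
    intro k hk
    have hk0 : k ≠ 0 := fun h0 => hk (h0 ▸ dvd_zero d)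
    simp [Polynomial.coeff_one, hk0]
  | @insert x s hx ih =>
    intro k hk
    rw [Finset.prod_insert hx, Polynomial.coeff_mul]
    apply Finset.sum_eq_zero
    intro p hp
    rw [Finset.HasAntidiagonal.mem_antidiagonal] at hp
    by_cases h1 : d ∣ p.1
    · have h2 : ¬ d ∣ p.2 := fun hh => hk (hp ▸ dvd_add h1 hh)
      rw [ih (fun y hy => h y (Finset.mem_insert_of_mem hy)) _ h2, mul_zero]
    · rw [h _ (Finset.mem_insert_self _ _) _ h1, zero_mul]

/-- increase hidden infinite copy structure: Let `(q_j)` satisfy `q_0 = 1`,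
`q_j ≥ 2` (`j ≥ 1`), let `c_{s,y}` be rational numbers and let `Σ a₀(m) z^m` be the formal
Taylor expansion of `∏_{y=0}^∞ (1 + Σ_{s=1}^{q_{y+1}−1} c_{s,y} z^{s Q_y})` (formally,
`a₀(m)` agrees with the `m`-th coefficient of the partial product over `y < Y` whenever
`m < Q_Y`).  Then for every `n` there are rationals `f_{l,n}` with `f_{0,n} = 1` such that
`a₀(l·Q_n + r) = f_{l,n} · a₀(r)` for all `0 ≤ r ≤ Q_n − 1`. -/
theorem stmt_16
    (q : ℕ → ℕ) (hq0 : q 0 = 1) (hq : ∀ j, 1 ≤ j → 2 ≤ q j)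
    (Q : ℕ → ℕ) (hQ : ∀ y, Q y = ∏ j ∈ Finset.range (y + 1), q j)
    (c : ℕ → ℕ → ℚ)
    (a : ℕ → ℚ)
    (ha : ∀ Y m : ℕ, m < Q Y →
      a m = (∏ y ∈ Finset.range Y,
        (1 + ∑ s ∈ Finset.Icc 1 (q (y + 1) - 1),
          Polynomial.C (c s y) * (Polynomial.X : Polynomial ℚ) ^ (s * Q y))).coeff m) :
    ∀ n : ℕ, ∃ f : ℕ → ℚ, f 0 = 1 ∧
      ∀ l r : ℕ, r ≤ Q n - 1 → a (l * Q n + r) = f l * a r := by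
  have ha' : ∀ Y m : ℕ, m < Q Y →
      a m = (∏ y ∈ Finset.range Y, myF q Q c y).coeff m := ha
  have hQ0 : Q 0 = 1 := by rw [hQ, Finset.prod_range_one, hq0]
  have hQsucc : ∀ y, Q (y + 1) = Q y * q (y + 1) := by
    intro y; rw [hQ, hQ, Finset.prod_range_succ]
  have hQpos : ∀ y, 1 ≤ Q y := by
    intro y
    induction y with
    | zero => omega
    | succ y ih =>
      have h2 : 2 ≤ q (y + 1) := hq _ (by omega)
      rw [hQsucc]
      exact Nat.one_le_iff_ne_zero.mpr (by positivity)
  have hQpow : ∀ y, 2 ^ y ≤ Q y := by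
    intro y
    induction y with
    | zero => omega
    | succ y ih =>
      have h2 : 2 ≤ q (y + 1) := hq _ (by omega)
      rw [hQsucc, pow_succ]
      exact Nat.mul_le_mul ih h2
  have hdvd : ∀ n Y : ℕ, n ≤ Y → Q n ∣ Q Y := by
    intro n Y hnY
    rw [hQ, hQ]
    exact Finset.prod_dvd_prod_of_subset _ _ _
      (Finset.range_subset_range.mpr (by omega))
  have hdeg : ∀ n, (∏ y ∈ Finset.range n, myF q Q c y).natDegree < Q n := by
    intro n
    induction n with
    | zero => simp [hQ0]
    | succ n ih =>
      rw [Finset.prod_range_succ]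
      have h1 := Polynomial.natDegree_mul_le
        (p := ∏ y ∈ Finset.range n, myF q Q c y) (q := myF q Q c n)
      have h2 := myF_deg q Q c n
      have hb : 2 ≤ q (n + 1) := hq _ (by omega)
      have h4 : (q (n + 1) - 1) * Q n + Q n = Q n * q (n + 1) := by
        have h5 : q (n + 1) - 1 + 1 = q (n + 1) := by omega
        calc (q (n + 1) - 1) * Q n + Q n = (q (n + 1) - 1 + 1) * Q n := by ring
          _ = Q n * q (n + 1) := by rw [h5]; ring
      rw [hQsucc]
      calc (_ * myF q Q c n).natDegree ≤ _ + _ := h1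
        _ < Q n + (q (n + 1) - 1) * Q n := by omega
        _ = Q n * q (n + 1) := by omega
  -- key computation
  have key : ∀ n l r : ℕ, r < Q n → ∀ Y, n ≤ Y → l * Q n + r < Q Y →
      a (l * Q n + r) =
        (∏ y ∈ Finset.Ico n Y, myF q Q c y).coeff (l * Q n) *
          (∏ y ∈ Finset.range n, myF q Q c y).coeff r := by
    intro n l r hr Y hnY hm
    rw [ha' Y _ hm, ← Finset.prod_range_mul_prod_Ico _ hnY, Polynomial.coeff_mul]
    rw [Finset.sum_eq_single ((r, l * Q n) : ℕ × ℕ)]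
    · ring
    · rintro ⟨i, j⟩ hmem hne
      rw [Finset.HasAntidiagonal.mem_antidiagonal] at hmem
      by_cases hi : (∏ y ∈ Finset.range n, myF q Q c y).coeff i = 0
      · rw [hi, zero_mul]
      by_cases hj : Q n ∣ j
      · exfalso
        have hideg : i ≤ (∏ y ∈ Finset.range n, myF q Q c y).natDegree :=
          Polynomial.le_natDegree_of_ne_zero hi
        have hiQ : i < Q n := lt_of_le_of_lt hideg (hdeg n)
        obtain ⟨t, ht⟩ := hj
        have hQn : 0 < Q n := hQpos n
        have hti : i + Q n * t = l * Q n + r := by omega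
        have h1 : (i + t * Q n) / Q n = t := by
          rw [Nat.add_mul_div_right _ _ hQn, Nat.div_eq_of_lt hiQ, zero_add]
        have h2 : (r + l * Q n) / Q n = l := by
          rw [Nat.add_mul_div_right _ _ hQn, Nat.div_eq_of_lt hr, zero_add]
        have heq : i + t * Q n = r + l * Q n := by
          rw [mul_comm t (Q n)]; omega
        have htl : t = l := by rw [← h1, ← h2, heq]
        apply hne
        subst htl
        have : i = r := by
          have := heq
          omega
        simp [this, ht, mul_comm]
      · rw [prod_supp (Q n) _ _ (fun y hy => myF_supp q Q c _ _
            (hdvd n y (Finset.mem_Ico.mp hy).1)) j hj, mul_zero]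
    · intro habs
      exact absurd (Finset.HasAntidiagonal.mem_antidiagonal.mpr (by ring)) habs
  have ha0 : a 0 = 1 := by
    rw [ha' 0 0 (by omega)]
    simp
  intro n
  refine ⟨fun l => a (l * Q n), by simpa using ha0, ?_⟩
  intro l r hr'
  have hQn : 0 < Q n := hQpos n
  have hr : r < Q n := by omega
  set m := l * Q n + r with hm
  set Y := max n m with hY
  have hmY : m < Q Y := by
    calc m < 2 ^ m := Nat.lt_two_pow_self (n := m)
      _ ≤ 2 ^ Y := Nat.pow_le_pow_right (by omega) (le_max_right n m)
      _ ≤ Q Y := hQpow Y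
  have hnY : n ≤ Y := le_max_left n m
  have e1 := key n l r hr Y hnY hmY
  have e2 := key n l 0 hQn Y hnY (by omega)
  have hc0 : (∏ y ∈ Finset.range n, myF q Q c y).coeff 0 = 1 := by
    rw [← ha' n 0 (by omega), ha0]
  rw [add_zero, hc0, mul_one] at e2
  have e3 : (∏ y ∈ Finset.range n, myF q Q c y).coeff r = a r :=
    (ha' n r (by omega)).symm
  show a m = a (l * Q n) * a r
  rw [hm, e1, e2, e3]
end
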